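/- There exists a constant C > 0 such that for every C¹ function g on [0,1] with g(0) = 0, one has ∫₀¹ |g(r)|² r dr ≤ C ∫₀¹ |(d/dr)(r g(r))|² ((1 − r²)/r) dr. -/

import Mathlib

open MeasureTheory Set
open scoped ENNReal

-- pointwise log bound: -log(1-r²)/2/r ≤ 1/√(1-r)
lemma aux_log {r : ℝ} (hr0 : 0 < r) (hr1 : r < 1) :
    -Real.log (1 - r ^ 2) / 2 / r ≤ (Real.sqrt (1 - r))⁻¹ := by
  have h1 : (0:ℝ) < 1 - r ^ 2 := by nlinarith
  set s := Real.sqrt (1 - r ^ 2) with hs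
  have hs0 : 0 < s := Real.sqrt_pos.2 h1
  have hs2 : s ^ 2 = 1 - r ^ 2 := Real.sq_sqrt h1.le
  have hs1 : s ≤ 1 := by
    rw [hs]
    calc Real.sqrt (1 - r ^ 2) ≤ Real.sqrt 1 := Real.sqrt_le_sqrt (by nlinarith)
    _ = 1 := Real.sqrt_one
  -- -log(1-r²) = -2 log s
  have hlog : Real.log (1 - r ^ 2) = 2 * Real.log s := by
    rw [← hs2, sq, Real.log_mul hs0.ne' hs0.ne']; ring
  have hls : -Real.log s ≤ s⁻¹ - 1 := by
    have := Real.log_le_sub_one_of_pos (inv_pos.2 hs0)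
    rwa [Real.log_inv] at this
  have key : -Real.log (1 - r ^ 2) ≤ 2 * r ^ 2 / s := by
    have h1s : 1 - s ≤ r ^ 2 := by nlinarith
    have : s⁻¹ - 1 = (1 - s) / s := by field_simp
    rw [hlog]
    rw [this] at hls
    calc -(2 * Real.log s) = 2 * (-Real.log s) := by ring
    _ ≤ 2 * ((1 - s) / s) := by linarith
    _ ≤ 2 * (r ^ 2 / s) := by
        gcongr
    _ = 2 * r ^ 2 / s := by ring
  have hsr : Real.sqrt (1 - r) ≤ s / r := by
    have : Real.sqrt (1 - r) * r ≤ Real.sqrt (1 - r ^ 2) := by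
      have hr : r = Real.sqrt (r ^ 2) := (Real.sqrt_sq hr0.le).symm
      calc Real.sqrt (1 - r) * r = Real.sqrt (1 - r) * Real.sqrt (r ^ 2) := by rw [← hr]
      _ = Real.sqrt ((1 - r) * r ^ 2) := (Real.sqrt_mul (by linarith) _).symm
      _ ≤ Real.sqrt (1 - r ^ 2) := Real.sqrt_le_sqrt (by nlinarith)
    calc Real.sqrt (1 - r) = Real.sqrt (1 - r) * r / r := by field_simp
    _ ≤ Real.sqrt (1 - r ^ 2) / r := by gcongr
  calc -Real.log (1 - r ^ 2) / 2 / r ≤ (2 * r ^ 2 / s) / 2 / r := by gcongr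
  _ = r / s := by field_simp
  _ = (s / r)⁻¹ := by rw [inv_div]
  _ ≤ (Real.sqrt (1 - r))⁻¹ := by
      apply inv_anti₀ (Real.sqrt_pos.2 (by linarith)) hsr

lemma aux_weight_int {r : ℝ} (hr0 : 0 < r) (hr1 : r < 1) :
    ∫ t in (0:ℝ)..r, t / (1 - t ^ 2) = -Real.log (1 - r ^ 2) / 2 := by
  have hd : ∀ t ∈ uIcc (0:ℝ) r,
      HasDerivAt (fun u : ℝ => -Real.log (1 - u ^ 2) / 2) (t / (1 - t ^ 2)) t := by
    intro t ht
    rw [uIcc_of_le hr0.le] at ht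
    have h1 : (0:ℝ) < 1 - t ^ 2 := by nlinarith [ht.1, ht.2]
    have hq : HasDerivAt (fun u : ℝ => 1 - u ^ 2) (-(2 * t)) t := by
      simpa using ((hasDerivAt_pow 2 t).const_sub 1)
    have := ((hq.log h1.ne').neg).div_const 2
    refine this.congr_deriv ?_
    field_simp
  have hint : IntervalIntegrable (fun t : ℝ => t / (1 - t ^ 2)) volume 0 r := by
    apply ContinuousOn.intervalIntegrable
    apply ContinuousOn.div continuousOn_id
    · fun_prop
    · intro t ht
      rw [uIcc_of_le hr0.le] at ht
      nlinarith [ht.1, ht.2]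
  rw [intervalIntegral.integral_eq_sub_of_hasDerivAt hd hint]
  simp

lemma aux_sqrt_int :
    ∫⁻ r in Ioo (0:ℝ) 1, ENNReal.ofReal (Real.sqrt (1 - r))⁻¹ ≤ ENNReal.ofReal 2 := by
  have hcong : ∀ r ∈ Ioo (0:ℝ) 1,
      ENNReal.ofReal (Real.sqrt (1 - r))⁻¹ = ENNReal.ofReal ((1 - r) ^ (-(1/2) : ℝ)) := by
    intro r hr
    congr 1
    rw [Real.sqrt_eq_rpow, Real.rpow_neg (by linarith [hr.2])]
  rw [setLIntegral_congr_fun measurableSet_Ioo hcong]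
  have h1 : IntervalIntegrable (fun x : ℝ => x ^ (-(1/2) : ℝ)) volume 0 1 :=
    intervalIntegral.intervalIntegrable_rpow' (by norm_num)
  have h2 : IntervalIntegrable (fun x : ℝ => (1 - x) ^ (-(1/2) : ℝ)) volume 0 1 := by
    have := h1.comp_sub_left 1
    norm_num at this
    exact this.symm
  have hint : IntegrableOn (fun r : ℝ => (1 - r) ^ (-(1/2) : ℝ)) (Ioo 0 1) := by
    have := (intervalIntegrable_iff_integrableOn_Ioc_of_le (by norm_num : (0:ℝ) ≤ 1)).1 h2
    exact this.mono_set Ioo_subset_Ioc_self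
  have hnn : 0 ≤ᵐ[volume.restrict (Ioo (0:ℝ) 1)] fun r : ℝ => (1 - r) ^ (-(1/2) : ℝ) := by
    refine (ae_restrict_iff' measurableSet_Ioo).2 (Filter.Eventually.of_forall fun r hr => ?_)
    exact Real.rpow_nonneg (by linarith [hr.2]) _
  rw [← ofReal_integral_eq_lintegral_ofReal hint hnn]
  apply ENNReal.ofReal_le_ofReal
  have : ∫ r in Ioo (0:ℝ) 1, (1 - r) ^ (-(1/2) : ℝ) = ∫ r in (0:ℝ)..1, (1 - r) ^ (-(1/2) : ℝ) := by
    rw [intervalIntegral.integral_of_le (by norm_num : (0:ℝ) ≤ 1),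
      ← integral_Ioc_eq_integral_Ioo]
  rw [this, intervalIntegral.integral_comp_sub_left (fun x : ℝ => x ^ (-(1/2) : ℝ)) 1]
  norm_num
  rw [integral_rpow (Or.inl (by norm_num))]
  norm_num

lemma aux_sq (a : ℝ) (ha : 0 ≤ a) : (ENNReal.ofReal a) ^ (2:ℝ) = ENNReal.ofReal (a ^ 2) := by
  rw [ENNReal.ofReal_rpow_of_nonneg ha (by norm_num)]
  congr 1
  rw [show ((2:ℝ)) = ((2:ℕ):ℝ) by norm_num, Real.rpow_natCast]

theorem stmt4 :
    ∃ C : ℝ, 0 < C ∧ ∀ g : ℝ → ℂ, ContDiffOn ℝ 1 g (Icc (0:ℝ) 1) → g 0 = 0 →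
      (∫⁻ r in Ioo (0:ℝ) 1, ENNReal.ofReal (‖g r‖ ^ 2 * r)) ≤
        ENNReal.ofReal C *
          ∫⁻ r in Ioo (0:ℝ) 1,
            ENNReal.ofReal
              (‖derivWithin (fun s : ℝ => (s : ℂ) * g s) (Icc (0:ℝ) 1) r‖ ^ 2 * ((1 - r ^ 2) / r)) := by
  refine ⟨4, by norm_num, ?_⟩
  intro g hg hg0
  set h : ℝ → ℂ := fun s : ℝ => (s : ℂ) * g s with hh
  set D : ℝ → ℂ := derivWithin h (Icc (0:ℝ) 1) with hD
  set R : ℝ≥0∞ := ∫⁻ r in Ioo (0:ℝ) 1, ENNReal.ofReal (‖D r‖ ^ 2 * ((1 - r ^ 2) / r)) with hR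
  by_cases hRtop : R = ⊤
  · rw [hRtop, ENNReal.mul_top (by simp : (ENNReal.ofReal 4) ≠ 0)]
    exact le_top
  have huniq : UniqueDiffOn ℝ (Icc (0:ℝ) 1) := uniqueDiffOn_Icc one_pos
  have hhc : ContDiffOn ℝ 1 h (Icc (0:ℝ) 1) :=
    (Complex.ofRealCLM.contDiff.contDiffOn).mul hg
  have hDcont : ContinuousOn D (Icc (0:ℝ) 1) := hhc.continuousOn_derivWithin huniq le_rfl
  have hderiv : ∀ x ∈ Ioo (0:ℝ) 1, HasDerivAt h (D x) x := by
    intro x hx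
    exact ((hhc.differentiableOn one_ne_zero x (Ioo_subset_Icc_self hx)).hasDerivWithinAt).hasDerivAt
      (Icc_mem_nhds hx.1 hx.2)
  have h0 : h 0 = 0 := by simp [hh, hg0]
  have hFTC : ∀ r ∈ Ioo (0:ℝ) 1, h r = ∫ t in (0:ℝ)..r, D t := by
    intro r hr
    have hsub : Icc (0:ℝ) r ⊆ Icc 0 1 := Icc_subset_Icc le_rfl hr.2.le
    have hint : IntervalIntegrable D volume 0 r := by
      apply ContinuousOn.intervalIntegrable
      rw [uIcc_of_le hr.1.le]
      exact hDcont.mono hsub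
    have := intervalIntegral.integral_eq_sub_of_hasDeriv_right_of_le hr.1.le
      (hhc.continuousOn.mono hsub)
      (fun x hx => (hderiv x ⟨hx.1, hx.2.trans hr.2⟩).hasDerivWithinAt) hint
    rw [this, h0, sub_zero]
  have key : ∀ r ∈ Ioo (0:ℝ) 1,
      ENNReal.ofReal (‖g r‖ ^ 2 * r) ≤ R * ENNReal.ofReal (Real.sqrt (1 - r))⁻¹ := by
    intro r hr
    obtain ⟨hr0, hr1⟩ := hr
    have hsub : Ioc (0:ℝ) r ⊆ Ioo 0 1 := fun t ht => ⟨ht.1, lt_of_le_of_lt ht.2 hr1⟩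
    have hsubI : Ioc (0:ℝ) r ⊆ Icc 0 1 := fun t ht => ⟨ht.1.le, (ht.2.trans hr1.le)⟩
    set W : ℝ → ℝ≥0∞ := fun t => ENNReal.ofReal ((1 - t ^ 2) / t) with hW
    set f : ℝ → ℝ≥0∞ := fun t => ENNReal.ofReal ‖D t‖ with hfd
    have hDI : IntegrableOn (fun t => ‖D t‖) (Ioc 0 r) := by
      have : ContinuousOn (fun t => ‖D t‖) (Icc 0 r) :=
        (hDcont.mono (Icc_subset_Icc le_rfl hr1.le)).norm
      exact (this.integrableOn_Icc).mono_set Ioc_subset_Icc_self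
    have stepB : ENNReal.ofReal ‖h r‖ ≤ ∫⁻ t in Ioc (0:ℝ) r, f t := by
      rw [← ofReal_integral_eq_lintegral_ofReal hDI
        ((ae_restrict_iff' measurableSet_Ioc).2
          (Filter.Eventually.of_forall fun t _ => norm_nonneg _))]
      apply ENNReal.ofReal_le_ofReal
      rw [hFTC r ⟨hr0, hr1⟩]
      calc ‖∫ t in (0:ℝ)..r, D t‖ ≤ ∫ t in (0:ℝ)..r, ‖D t‖ :=
            intervalIntegral.norm_integral_le_integral_norm hr0.le
      _ = ∫ t in Ioc (0:ℝ) r, ‖D t‖ := intervalIntegral.integral_of_le hr0.le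
    have hWm : Measurable W := by
      apply Measurable.ennreal_ofReal
      exact (measurable_const.sub (measurable_id.pow_const 2)).div measurable_id
    have hfm : AEMeasurable f (volume.restrict (Ioc (0:ℝ) r)) :=
      (((hDcont.mono hsubI).aemeasurable measurableSet_Ioc).norm).ennreal_ofReal
    have hconj : Real.HolderConjugate 2 2 := Real.HolderConjugate.two_two
    have holder := ENNReal.lintegral_mul_le_Lp_mul_Lq (volume.restrict (Ioc (0:ℝ) r)) hconj
      (f := fun t => f t * W t ^ ((1:ℝ)/2)) (g := fun t => W t ^ (-((1:ℝ)/2)))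
      (hfm.mul ((hWm.pow_const ((1:ℝ)/2)).aemeasurable))
      ((hWm.pow_const (-((1:ℝ)/2))).aemeasurable)
    have heq1 : (∫⁻ t in Ioc (0:ℝ) r, f t)
        = ∫⁻ t in Ioc (0:ℝ) r,
            ((fun t => f t * W t ^ ((1:ℝ)/2)) * fun t => W t ^ (-((1:ℝ)/2))) t := by
      apply setLIntegral_congr_fun measurableSet_Ioc
      intro t ht
      have ht1 : (0:ℝ) < 1 - t ^ 2 := by nlinarith [ht.1, ht.2]
      have hW0 : W t ≠ 0 := by
        simp only [hW, ne_eq, ENNReal.ofReal_eq_zero, not_le]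
        exact div_pos ht1 ht.1
      simp only [Pi.mul_apply]
      rw [mul_assoc, ← ENNReal.rpow_add _ _ hW0 ENNReal.ofReal_ne_top]
      norm_num
    have hA : (∫⁻ t in Ioc (0:ℝ) r, (f t * W t ^ ((1:ℝ)/2)) ^ (2:ℝ)) ≤ R := by
      have heq : ∀ t ∈ Ioc (0:ℝ) r, (f t * W t ^ ((1:ℝ)/2)) ^ (2:ℝ)
          = ENNReal.ofReal (‖D t‖ ^ 2 * ((1 - t ^ 2) / t)) := by
        intro t ht
        have ht1 : (0:ℝ) < 1 - t ^ 2 := by nlinarith [ht.1, ht.2]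
        rw [ENNReal.mul_rpow_of_nonneg _ _ (by norm_num : (0:ℝ) ≤ 2),
          ← ENNReal.rpow_mul]
        rw [ENNReal.ofReal_mul (by positivity), aux_sq _ (norm_nonneg _)]
        norm_num
        rfl
      calc (∫⁻ t in Ioc (0:ℝ) r, (f t * W t ^ ((1:ℝ)/2)) ^ (2:ℝ))
          = ∫⁻ t in Ioc (0:ℝ) r, ENNReal.ofReal (‖D t‖ ^ 2 * ((1 - t ^ 2) / t)) :=
            setLIntegral_congr_fun measurableSet_Ioc heq
      _ ≤ ∫⁻ t in Ioo (0:ℝ) 1, ENNReal.ofReal (‖D t‖ ^ 2 * ((1 - t ^ 2) / t)) :=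
            lintegral_mono_set hsub
      _ = R := hR.symm
    have hB : (∫⁻ t in Ioc (0:ℝ) r, (W t ^ (-((1:ℝ)/2))) ^ (2:ℝ))
        = ENNReal.ofReal (-Real.log (1 - r ^ 2) / 2) := by
      have heq : ∀ t ∈ Ioc (0:ℝ) r, (W t ^ (-((1:ℝ)/2))) ^ (2:ℝ)
          = ENNReal.ofReal (t / (1 - t ^ 2)) := by
        intro t ht
        have ht1 : (0:ℝ) < 1 - t ^ 2 := by nlinarith [ht.1, ht.2]
        have hwpos : (0:ℝ) < (1 - t ^ 2) / t := div_pos ht1 ht.1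
        rw [← ENNReal.rpow_mul]
        norm_num
        rw [ENNReal.rpow_neg_one, show W t = ENNReal.ofReal ((1 - t ^ 2) / t) from rfl,
          ← ENNReal.ofReal_inv_of_pos hwpos, inv_div]
      rw [setLIntegral_congr_fun measurableSet_Ioc heq]
      have hint : IntegrableOn (fun t : ℝ => t / (1 - t ^ 2)) (Ioc 0 r) := by
        have : ContinuousOn (fun t : ℝ => t / (1 - t ^ 2)) (Icc 0 r) := by
          apply ContinuousOn.div continuousOn_id
          · fun_prop
          · intro t ht
            nlinarith [ht.1, ht.2]
        exact (this.integrableOn_Icc).mono_set Ioc_subset_Icc_self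
      have hnn : 0 ≤ᵐ[volume.restrict (Ioc (0:ℝ) r)] fun t : ℝ => t / (1 - t ^ 2) := by
        refine (ae_restrict_iff' measurableSet_Ioc).2
          (Filter.Eventually.of_forall fun t ht => ?_)
        have ht1 : (0:ℝ) < 1 - t ^ 2 := by nlinarith [ht.1, ht.2]
        exact le_of_lt (div_pos ht.1 ht1)
      rw [← ofReal_integral_eq_lintegral_ofReal hint hnn]
      congr 1
      rw [← intervalIntegral.integral_of_le hr0.le]
      exact aux_weight_int hr0 hr1
    have hL : (0:ℝ) ≤ -Real.log (1 - r ^ 2) / 2 := by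
      have : Real.log (1 - r ^ 2) ≤ 0 :=
        Real.log_nonpos (by nlinarith) (by nlinarith)
      linarith
    have hmain : ENNReal.ofReal ‖h r‖ ≤
        R ^ ((1:ℝ)/2) * (ENNReal.ofReal (-Real.log (1 - r ^ 2) / 2)) ^ ((1:ℝ)/2) := by
      calc ENNReal.ofReal ‖h r‖ ≤ ∫⁻ t in Ioc (0:ℝ) r, f t := stepB
      _ = _ := heq1
      _ ≤ (∫⁻ t in Ioc (0:ℝ) r, (f t * W t ^ ((1:ℝ)/2)) ^ (2:ℝ)) ^ ((1:ℝ)/2) *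
          (∫⁻ t in Ioc (0:ℝ) r, (W t ^ (-((1:ℝ)/2))) ^ (2:ℝ)) ^ ((1:ℝ)/2) := by
            simpa using holder
      _ ≤ R ^ ((1:ℝ)/2) * (ENNReal.ofReal (-Real.log (1 - r ^ 2) / 2)) ^ ((1:ℝ)/2) := by
            rw [hB]
            exact mul_le_mul_left (ENNReal.rpow_le_rpow hA (by norm_num)) _
    have hsq : ENNReal.ofReal (‖h r‖ ^ 2) ≤
        R * ENNReal.ofReal (-Real.log (1 - r ^ 2) / 2) := by
      have h2 := mul_le_mul' hmain hmain
      calc ENNReal.ofReal (‖h r‖ ^ 2)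
          = ENNReal.ofReal ‖h r‖ * ENNReal.ofReal ‖h r‖ := by
            rw [← ENNReal.ofReal_mul (norm_nonneg _), ← sq]
      _ ≤ (R ^ ((1:ℝ)/2) * (ENNReal.ofReal (-Real.log (1 - r ^ 2) / 2)) ^ ((1:ℝ)/2)) *
          (R ^ ((1:ℝ)/2) * (ENNReal.ofReal (-Real.log (1 - r ^ 2) / 2)) ^ ((1:ℝ)/2)) := h2
      _ = R * ENNReal.ofReal (-Real.log (1 - r ^ 2) / 2) := by
            rw [mul_mul_mul_comm, ← ENNReal.rpow_add_of_nonneg _ _ (by norm_num) (by norm_num),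
              ← ENNReal.rpow_add_of_nonneg _ _ (by norm_num) (by norm_num)]
            norm_num
    have hnr : ‖h r‖ = r * ‖g r‖ := by
      simp [hh, Complex.norm_real, abs_of_pos hr0]
    have hgr : ‖g r‖ ^ 2 * r = ‖h r‖ ^ 2 * r⁻¹ := by
      rw [hnr]; field_simp
    calc ENNReal.ofReal (‖g r‖ ^ 2 * r)
        = ENNReal.ofReal (‖h r‖ ^ 2) * ENNReal.ofReal r⁻¹ := by
          rw [hgr, ENNReal.ofReal_mul (by positivity)]
    _ ≤ (R * ENNReal.ofReal (-Real.log (1 - r ^ 2) / 2)) * ENNReal.ofReal r⁻¹ :=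
          mul_le_mul_left hsq _
    _ = R * ENNReal.ofReal (-Real.log (1 - r ^ 2) / 2 / r) := by
          rw [mul_assoc, ← ENNReal.ofReal_mul hL, ← div_eq_mul_inv]
    _ ≤ R * ENNReal.ofReal (Real.sqrt (1 - r))⁻¹ :=
          mul_le_mul_right (ENNReal.ofReal_le_ofReal (aux_log hr0 hr1)) _
  calc ∫⁻ r in Ioo (0:ℝ) 1, ENNReal.ofReal (‖g r‖ ^ 2 * r)
      ≤ ∫⁻ r in Ioo (0:ℝ) 1, R * ENNReal.ofReal (Real.sqrt (1 - r))⁻¹ :=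
        lintegral_mono_ae ((ae_restrict_iff' measurableSet_Ioo).2
          (Filter.Eventually.of_forall key))
  _ = R * ∫⁻ r in Ioo (0:ℝ) 1, ENNReal.ofReal (Real.sqrt (1 - r))⁻¹ :=
        lintegral_const_mul' _ _ hRtop
  _ ≤ R * ENNReal.ofReal 2 := mul_le_mul_right aux_sqrt_int _
  _ ≤ ENNReal.ofReal 4 * R := by
        rw [mul_comm]
        exact mul_le_mul_left (ENNReal.ofReal_le_ofReal (by norm_num)) _
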